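/- The function Δ is even and (2π)-periodic, it is increasing and bijective from [0, π] onto [0, 1], and for every ω ∈ ℝ one has Δ(ω) = tan( (π/4)·(1 − δ(ω, π + 2πℤ)/π) ) and Δ(ω) ≤ 1 − δ(ω, π + 2πℤ)/π. -/

import Mathlib

open Real Set Metric

noncomputable def Dfun (ω : ℝ) : ℝ :=
  min |Real.tan (ω / 4)| |Real.tan (ω / 4)|⁻¹

lemma Dfun_even (ω : ℝ) : Dfun (-ω) = Dfun ω := by
  simp [Dfun, neg_div, Real.tan_neg, abs_neg]

lemma tan_add_pi_div_two (x : ℝ) : Real.tan (x + π / 2) = -(Real.tan x)⁻¹ := by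
  have h := Real.tan_periodic.sub_eq (x + π / 2)
  have : x + π / 2 - π = -(π / 2 - x) := by ring
  rw [← h, this, Real.tan_neg, Real.tan_pi_div_two_sub]

lemma Dfun_periodic (ω : ℝ) : Dfun (ω + 2 * π) = Dfun ω := by
  have h : (ω + 2 * π) / 4 = ω / 4 + π / 2 := by ring
  rw [Dfun, h, tan_add_pi_div_two, abs_neg, abs_inv, inv_inv, min_comm]
  rfl

lemma Dfun_per : Function.Periodic Dfun (2 * π) := Dfun_periodic

lemma Dfun_eq_tan {ω : ℝ} (hω : ω ∈ Icc 0 π) : Dfun ω = Real.tan (ω / 4) := by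
  obtain ⟨h0, h1⟩ := hω
  have hpi := Real.pi_pos
  have ht0 : 0 ≤ Real.tan (ω / 4) :=
    Real.tan_nonneg_of_nonneg_of_le_pi_div_two (by linarith) (by linarith)
  have ht1 : Real.tan (ω / 4) ≤ 1 := by
    rw [← Real.tan_pi_div_four]
    rcases eq_or_lt_of_le (show ω / 4 ≤ π / 4 by linarith) with h | h
    · rw [h]
    · exact le_of_lt (Real.tan_lt_tan_of_lt_of_lt_pi_div_two (by linarith) (by linarith) h)
  rw [Dfun, abs_of_nonneg ht0]
  rcases eq_or_lt_of_le ht0 with h | h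
  · simp [← h]
  · exact min_eq_left (le_trans ht1 (one_le_inv_iff₀.2 ⟨h, ht1⟩))

lemma Dfun_mono : StrictMonoOn Dfun (Icc 0 π) := by
  intro x hx y hy hxy
  have hpi := Real.pi_pos
  rw [Dfun_eq_tan hx, Dfun_eq_tan hy]
  exact Real.tan_lt_tan_of_lt_of_lt_pi_div_two
    (by linarith [hx.1]) (by linarith [hy.2]) (by linarith)

lemma Dfun_contOn : ContinuousOn Dfun (Icc 0 π) := by
  have hpi := Real.pi_pos
  have : ContinuousOn (fun ω : ℝ => Real.tan (ω / 4)) (Icc 0 π) := by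
    apply Real.continuousOn_tan.comp (by fun_prop)
    intro x hx
    exact ne_of_gt (Real.cos_pos_of_mem_Ioo ⟨by simp; linarith [hx.1], by simp; linarith [hx.2]⟩)
  exact this.congr fun x hx => Dfun_eq_tan hx

lemma Dfun_zero : Dfun 0 = 0 := by simp [Dfun]

lemma Dfun_pi : Dfun π = 1 := by
  rw [Dfun_eq_tan (by constructor <;> [exact le_of_lt Real.pi_pos; rfl]), Real.tan_pi_div_four]

lemma Dfun_bij : Set.BijOn Dfun (Icc 0 π) (Icc 0 1) := by
  have hpi := Real.pi_pos
  refine ⟨?_, Dfun_mono.injOn, ?_⟩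
  · intro x hx
    rw [Dfun_eq_tan hx]
    constructor
    · exact Real.tan_nonneg_of_nonneg_of_le_pi_div_two (by linarith [hx.1]) (by linarith [hx.2])
    · rw [← Real.tan_pi_div_four]
      rcases eq_or_lt_of_le (show x / 4 ≤ π / 4 by linarith [hx.2]) with h | h
      · rw [h]
      · exact le_of_lt (Real.tan_lt_tan_of_lt_of_lt_pi_div_two (by linarith [hx.1]) (by linarith) h)
  · intro y hy
    have := intermediate_value_Icc (le_of_lt hpi) Dfun_contOn
    rw [Dfun_zero, Dfun_pi] at this
    exact this hy

/-- convexity of tan on `[0, π/4]` -/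
lemma tan_convex : ConvexOn ℝ (Icc 0 (π / 4)) Real.tan := by
  have hpi := Real.pi_pos
  have hcos : ∀ x ∈ Icc (0:ℝ) (π / 4), Real.cos x ≠ 0 := fun x hx =>
    ne_of_gt (Real.cos_pos_of_mem_Ioo ⟨by linarith [hx.1], by linarith [hx.2]⟩)
  refine MonotoneOn.convexOn_of_deriv (convex_Icc _ _) ?_ ?_ ?_
  · exact Real.continuousOn_tan.mono fun x hx => hcos x hx
  · rw [interior_Icc]
    intro x hx
    exact (Real.hasDerivAt_tan (hcos x (Ioo_subset_Icc_self hx))).differentiableAt.differentiableWithinAt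
  · rw [interior_Icc]
    intro x hx y hy hxy
    rw [Real.deriv_tan, Real.deriv_tan]
    have hcx : 0 < Real.cos x := Real.cos_pos_of_mem_Ioo ⟨by linarith [hx.1], by linarith [hx.2]⟩
    have hcy : 0 < Real.cos y := Real.cos_pos_of_mem_Ioo ⟨by linarith [hy.1], by linarith [hy.2]⟩
    have hle : Real.cos y ≤ Real.cos x := by
      rcases eq_or_lt_of_le hxy with h | h
      · rw [h]
      · exact le_of_lt (Real.strictAntiOn_cos ⟨le_of_lt hx.1, by linarith [hx.2]⟩
          ⟨le_of_lt hy.1, by linarith [hy.2]⟩ h)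
    have : Real.cos y ^ 2 ≤ Real.cos x ^ 2 := by nlinarith
    rw [div_le_div_iff₀ (by positivity) (by positivity)]
    nlinarith

lemma tan_le_linear {t : ℝ} (h0 : 0 ≤ t) (h1 : t ≤ π / 4) : Real.tan t ≤ 4 * t / π := by
  have hpi := Real.pi_pos
  have hmem0 : (0:ℝ) ∈ Icc (0:ℝ) (π / 4) := ⟨le_refl _, by linarith⟩
  have hmem1 : π / 4 ∈ Icc (0:ℝ) (π / 4) := ⟨by linarith, le_refl _⟩
  have ha : (0:ℝ) ≤ 1 - 4 * t / π := by
    rw [sub_nonneg, div_le_one hpi]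
    linarith
  have hb : (0:ℝ) ≤ 4 * t / π := by positivity
  have hab : (1 - 4 * t / π) + 4 * t / π = 1 := by ring
  have := tan_convex.2 hmem0 hmem1 ha hb hab
  simp only [smul_eq_mul, mul_zero, zero_add, Real.tan_zero] at this
  have harg : 4 * t / π * (π / 4) = t := by field_simp
  rw [harg] at this
  rw [Real.tan_pi_div_four] at this
  linarith

section Dist

variable (ω : ℝ)

noncomputable def Sset : Set ℝ := Set.range fun k : ℤ => Real.pi + 2 * Real.pi * (k : ℝ)

noncomputable def uRep (ω : ℝ) : ℝ := ω - 2 * π * (round (ω / (2 * π)) : ℤ)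

lemma uRep_mem : |uRep ω| ≤ π := by
  have hpi := Real.pi_pos
  have h := abs_sub_round (ω / (2 * π))
  set q : ℝ := ((round (ω / (2 * π)) : ℤ) : ℝ) with hq
  have h3 : uRep ω = 2 * π * (ω / (2 * π) - q) := by
    rw [uRep, mul_sub, mul_div_cancel₀ _ (show (2:ℝ) * π ≠ 0 by positivity)]
  have h2 : |uRep ω| = 2 * π * |ω / (2 * π) - q| := by
    rw [h3, abs_mul, abs_of_pos (show (0:ℝ) < 2 * π by linarith)]
  rw [h2]
  calc 2 * π * |ω / (2 * π) - q| ≤ 2 * π * (1/2) := by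
        apply mul_le_mul_of_nonneg_left h (by linarith)
    _ = π := by ring

lemma infDist_formula : infDist ω (Sset) = π - |uRep ω| := by
  have hpi := Real.pi_pos
  have hu := uRep_mem ω
  set k0 : ℤ := round (ω / (2 * π))
  have hne : (Sset).Nonempty := ⟨π + 2 * π * ((0:ℤ):ℝ), ⟨0, rfl⟩⟩
  apply le_antisymm
  · rcases le_or_gt 0 (uRep ω) with h | h
    · have hmem : π + 2 * π * ((k0:ℝ)) ∈ Sset := ⟨k0, rfl⟩
      calc infDist ω Sset ≤ dist ω (π + 2 * π * (k0:ℝ)) := infDist_le_dist_of_mem hmem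
        _ = π - |uRep ω| := by
            rw [Real.dist_eq, abs_of_nonneg h]
            have : ω - (π + 2 * π * (k0:ℝ)) = uRep ω - π := by
              simp [uRep]; ring
            rw [this, abs_of_nonpos (by linarith [abs_le.1 hu])]
            ring
    · have hmem : π + 2 * π * (((k0 - 1 : ℤ)):ℝ) ∈ Sset := ⟨k0 - 1, rfl⟩
      calc infDist ω Sset ≤ dist ω (π + 2 * π * ((k0 - 1 : ℤ):ℝ)) := infDist_le_dist_of_mem hmem
        _ = π - |uRep ω| := by
            rw [Real.dist_eq, abs_of_neg h]
            have : ω - (π + 2 * π * ((k0 - 1 : ℤ):ℝ)) = uRep ω + π := by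
              push_cast
              simp [uRep]; ring
            rw [this, abs_of_nonneg (by linarith [abs_le.1 hu])]
            ring
  · by_contra hlt
    push_neg at hlt
    rw [infDist_lt_iff hne] at hlt
    obtain ⟨y, ⟨k, rfl⟩, hy⟩ := hlt
    rw [Real.dist_eq] at hy
    have hw : ω - (π + 2 * π * (k:ℝ)) = uRep ω - π + 2 * π * ((k0 - k : ℤ):ℝ) := by
      push_cast
      simp [uRep]; ring
    rw [hw] at hy
    set m : ℤ := k0 - k
    have habs := abs_le.1 hu
    rcases le_or_gt m 0 with hm | hm
    · have hm' : (m:ℝ) ≤ 0 := by exact_mod_cast hm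
      have h1 : uRep ω - π + 2 * π * (m:ℝ) ≤ 0 := by nlinarith
      rw [abs_of_nonpos h1] at hy
      nlinarith [le_abs_self (uRep ω)]
    · have hm' : (1:ℝ) ≤ (m:ℝ) := by exact_mod_cast hm
      have h1 : 0 ≤ uRep ω - π + 2 * π * (m:ℝ) := by nlinarith
      rw [abs_of_nonneg h1] at hy
      nlinarith [neg_abs_le (uRep ω)]

lemma Dfun_eq_uRep : Dfun ω = Real.tan (|uRep ω| / 4) := by
  have h1 : Dfun ω = Dfun (uRep ω) := by
    have := Dfun_per.sub_int_mul_eq (x := ω) (n := round (ω / (2 * π)))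
    rw [uRep]
    rw [← this]
    ring_nf
  have hu := abs_le.1 (uRep_mem ω)
  rcases le_or_gt 0 (uRep ω) with h | h
  · rw [h1, abs_of_nonneg h]
    exact Dfun_eq_tan ⟨h, hu.2⟩
  · rw [h1, ← Dfun_even (uRep ω), abs_of_neg h,
      Dfun_eq_tan (show -uRep ω ∈ Icc 0 π from ⟨by linarith, by linarith [hu.1]⟩)]

lemma Dfun_formula : Dfun ω =
    Real.tan (π / 4 * (1 - infDist ω Sset / π)) := by
  have hpi := Real.pi_pos
  rw [infDist_formula, Dfun_eq_uRep]
  congr 1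
  field_simp
  ring

lemma Dfun_bound : Dfun ω ≤ 1 - infDist ω Sset / π := by
  have hpi := Real.pi_pos
  have hu := uRep_mem ω
  rw [infDist_formula, Dfun_eq_uRep]
  have h1 : 1 - (π - |uRep ω|) / π = |uRep ω| / π := by field_simp; ring
  rw [h1]
  have := tan_le_linear (t := |uRep ω| / 4) (by positivity) (by linarith)
  calc Real.tan (|uRep ω| / 4) ≤ 4 * (|uRep ω| / 4) / π := this
    _ = |uRep ω| / π := by ring

end Dist

/-- `Δ` is even, `(2π)`-periodic, increasing and bijective from
`[0, π]` onto `[0, 1]`, with the explicit expression and bound in terms of the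
distance to `π + 2πℤ`. -/
theorem Dfun_properties :
    (∀ ω : ℝ, Dfun (-ω) = Dfun ω) ∧
    (∀ ω : ℝ, Dfun (ω + 2 * Real.pi) = Dfun ω) ∧
    StrictMonoOn Dfun (Set.Icc 0 Real.pi) ∧
    Set.BijOn Dfun (Set.Icc 0 Real.pi) (Set.Icc 0 1) ∧
    (∀ ω : ℝ, Dfun ω =
      Real.tan (Real.pi / 4 *
        (1 - Metric.infDist ω
            (Set.range fun k : ℤ => Real.pi + 2 * Real.pi * (k : ℝ)) / Real.pi))) ∧
    (∀ ω : ℝ, Dfun ω ≤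
      1 - Metric.infDist ω
          (Set.range fun k : ℤ => Real.pi + 2 * Real.pi * (k : ℝ)) / Real.pi) := by
  exact ⟨Dfun_even, Dfun_periodic, Dfun_mono, Dfun_bij, Dfun_formula, Dfun_bound⟩
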